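/- Let F(z) := ∫₀^z (1+t⁴)^{−1/2} dt and L := Γ(1/4)·Γ(5/4)/√π. Then lim_{z→∞} z·(L − F(z)) = 1, and more precisely lim_{z→∞} z⁵·(F(z) − L + 1/z) = 1/10; in particular F(z) = L − 1/z + O(z⁻⁵) as z → ∞. -/

import Mathlib

open Real Filter Topology Asymptotics MeasureTheory Set

/-- `F(z) = ∫₀^z dt/√(1+t⁴)`. -/
noncomputable def Fint (z : ℝ) : ℝ := ∫ t in (0:ℝ)..z, 1 / Real.sqrt (1 + t ^ 4)

/-- `L = Γ(1/4)·Γ(5/4)/√π`, the value of the improper integral `∫₀^∞ dt/√(1+t⁴)`. -/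
noncomputable def Lval : ℝ := Real.Gamma (1/4) * Real.Gamma (5/4) / Real.sqrt Real.pi

lemma beta_real : ∫ t in (0:ℝ)..1, t ^ (-(3/4) : ℝ) * (1-t) ^ (-(3/4) : ℝ)
    = Real.Gamma (1/4) ^ 2 / Real.sqrt Real.pi := by
  have h := Complex.Gamma_mul_Gamma_eq_betaIntegral (s := 1/4) (t := 1/4) (by norm_num) (by norm_num)
  have h2 : Complex.betaIntegral (1/4) (1/4)
      = ((∫ t in (0:ℝ)..1, t ^ (-(3/4) : ℝ) * (1-t) ^ (-(3/4) : ℝ) : ℝ) : ℂ) := by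
    rw [Complex.betaIntegral, ← intervalIntegral.integral_ofReal]
    refine intervalIntegral.integral_congr fun x hx => ?_
    rw [Set.uIcc_of_le (by norm_num : (0:ℝ) ≤ 1)] at hx
    have h1x : (0:ℝ) ≤ 1 - x := by linarith [hx.2]
    rw [show (1/4 - 1 : ℂ) = ((-(3/4) : ℝ) : ℂ) by norm_num,
      show ((1:ℂ) - (x:ℝ)) = ((1 - x : ℝ) : ℂ) by push_cast; ring,
      ← Complex.ofReal_cpow hx.1, ← Complex.ofReal_cpow h1x, ← Complex.ofReal_mul]
  rw [h2, show (1/4 + 1/4 : ℂ) = ((1/2 : ℝ) : ℂ) by norm_num,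
    show (1/4 : ℂ) = ((1/4 : ℝ) : ℂ) by norm_num, Complex.Gamma_ofReal,
    Complex.Gamma_ofReal] at h
  have h' : Real.Gamma (1/4) * Real.Gamma (1/4)
      = Real.Gamma (1/2) * ∫ t in (0:ℝ)..1, t ^ (-(3/4) : ℝ) * (1-t) ^ (-(3/4) : ℝ) := by
    exact_mod_cast h
  rw [Real.Gamma_one_half_eq] at h'
  have hpi : Real.sqrt Real.pi ≠ 0 := by positivity
  field_simp
  nlinarith [h']


lemma cov : ∫ t in Ioo (0:ℝ) 1, t ^ (-(3/4):ℝ) * (1-t) ^ (-(3/4):ℝ)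
    = ∫ s in Ioi (0:ℝ), 4 * (1 / Real.sqrt (1 + s ^ 4)) := by
  have himg : (fun s : ℝ => s ^ 4 / (1 + s ^ 4)) '' Ioi 0 = Ioo 0 1 := by
    ext y
    constructor
    · rintro ⟨s, hs, rfl⟩
      have hs : (0:ℝ) < s := hs
      have hP : (0:ℝ) < 1 + s ^ 4 := by positivity
      exact ⟨by positivity, (div_lt_one hP).2 (by nlinarith)⟩
    · rintro ⟨hy0, hy1⟩
      have hdiv : (0:ℝ) < y / (1 - y) := div_pos hy0 (by linarith)
      refine ⟨(y / (1 - y)) ^ (1/4 : ℝ), Real.rpow_pos_of_pos hdiv _, ?_⟩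
      have h4 : ((y / (1 - y)) ^ (1/4 : ℝ)) ^ 4 = y / (1 - y) := by
        rw [← Real.rpow_natCast ((y / (1 - y)) ^ (1/4:ℝ)) 4, ← Real.rpow_mul hdiv.le]
        norm_num
      show ((y / (1 - y)) ^ (1/4 : ℝ)) ^ 4 / (1 + ((y / (1 - y)) ^ (1/4 : ℝ)) ^ 4) = y
      rw [h4]
      have h1y : (1:ℝ) - y ≠ 0 := by linarith
      have : 1 + y / (1 - y) = 1 / (1 - y) := by field_simp; ring
      rw [this, div_div_div_cancel_right₀, div_one]
      exact h1y
  have hderiv : ∀ s ∈ Ioi (0:ℝ), HasDerivWithinAt (fun s : ℝ => s ^ 4 / (1 + s ^ 4))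
      (4 * s ^ 3 / (1 + s ^ 4) ^ 2) (Ioi 0) s := by
    intro s _
    have hP : (1 + s ^ 4 : ℝ) ≠ 0 := by positivity
    have := (hasDerivAt_pow 4 s).div ((hasDerivAt_const s 1).add (hasDerivAt_pow 4 s)) hP
    convert this.hasDerivWithinAt using 1
    · rfl
    · rfl
    · rfl
    simp only [Pi.add_apply]
    field_simp
    ring
  have hinj : InjOn (fun s : ℝ => s ^ 4 / (1 + s ^ 4)) (Ioi 0) := by
    intro a ha b hb hab
    have ha : (0:ℝ) < a := ha
    have hb : (0:ℝ) < b := hb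
    simp only at hab
    have hPa : (1 + a ^ 4 : ℝ) ≠ 0 := by positivity
    have hPb : (1 + b ^ 4 : ℝ) ≠ 0 := by positivity
    have h4 : a ^ 4 = b ^ 4 := by
      field_simp at hab; nlinarith [hab]
    rcases lt_trichotomy a b with h | h | h
    · nlinarith [pow_lt_pow_left₀ h ha.le (n := 4) (by norm_num)]
    · exact h
    · nlinarith [pow_lt_pow_left₀ h hb.le (n := 4) (by norm_num)]
  rw [← himg, integral_image_eq_integral_abs_deriv_smul measurableSet_Ioi hderiv hinj]
  refine setIntegral_congr_fun measurableSet_Ioi fun s hs => ?_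
  have hs : (0:ℝ) < s := hs
  have hP : (0:ℝ) < 1 + s ^ 4 := by positivity
  have h1 : 1 - s ^ 4 / (1 + s ^ 4) = 1 / (1 + s ^ 4) := by field_simp; ring
  have hA : (s ^ 4 / (1 + s ^ 4)) ^ (-(3/4):ℝ) = (1 + s ^ 4) ^ ((3:ℝ)/4) / s ^ 3 := by
    rw [Real.rpow_neg (by positivity), Real.div_rpow (by positivity) hP.le,
      ← Real.rpow_natCast s 4, ← Real.rpow_mul hs.le]
    norm_num
  have hB : (1 / (1 + s ^ 4)) ^ (-(3/4):ℝ) = (1 + s ^ 4) ^ ((3:ℝ)/4) := by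
    rw [one_div, ← Real.rpow_neg_one, ← Real.rpow_mul hP.le]
    norm_num
  have habs : |4 * s ^ 3 / (1 + s ^ 4) ^ 2| = 4 * s ^ 3 / (1 + s ^ 4) ^ 2 := by
    rw [abs_of_pos (by positivity)]
  rw [smul_eq_mul, habs, h1, hA, hB, Real.sqrt_eq_rpow]
  have hcomb : (1 + s ^ 4) ^ ((3:ℝ)/4) * (1 + s ^ 4) ^ ((3:ℝ)/4) = (1 + s ^ 4) ^ ((3:ℝ)/2) := by
    rw [← Real.rpow_add hP]; norm_num
  have hPP : (1 + s ^ 4) ^ ((3:ℝ)/2) * (1 + s ^ 4) ^ ((1:ℝ)/2) = (1 + s ^ 4) ^ 2 := by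
    rw [← Real.rpow_add hP, ← Real.rpow_natCast (1 + s ^ 4) 2]; norm_num
  have hs3 : (s:ℝ) ^ 3 ≠ 0 := by positivity
  have h12 : ((1 + s ^ 4) ^ ((1:ℝ)/2)) ≠ 0 := by positivity
  field_simp
  linear_combination ((1 + s ^ 4) ^ ((1:ℝ)/2)) * hcomb + hPP


noncomputable def fI (t : ℝ) : ℝ := 1 / Real.sqrt (1 + t ^ 4)

lemma f_cont : Continuous fI := by
  refine continuous_const.div (Real.continuous_sqrt.comp (by continuity)) fun t => ?_
  have : (0:ℝ) < 1 + t ^ 4 := by positivity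
  positivity

lemma f_intOn : IntegrableOn fI (Ioi 0) := by
  rw [← Ioc_union_Ioi_eq_Ioi (zero_le_one : (0:ℝ) ≤ 1)]
  refine (f_cont.integrableOn_Ioc).union ?_
  refine Integrable.mono' (integrableOn_Ioi_rpow_of_lt (by norm_num : (-2:ℝ) < -1) one_pos)
    f_cont.aestronglyMeasurable.restrict ?_
  rw [ae_restrict_iff' measurableSet_Ioi]
  filter_upwards with x hx
  have hx1 : (1:ℝ) < x := hx
  have hx0 : (0:ℝ) < x := by linarith
  have h1 : (x:ℝ) ^ 2 ≤ Real.sqrt (1 + x ^ 4) := by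
    rw [show (x:ℝ) ^ 2 = Real.sqrt ((x ^ 2) ^ 2) from (Real.sqrt_sq (by positivity)).symm]
    apply Real.sqrt_le_sqrt
    nlinarith
  have h2 : (0:ℝ) < Real.sqrt (1 + x ^ 4) := by
    have : (0:ℝ) < 1 + x ^ 4 := by positivity
    positivity
  rw [Real.norm_eq_abs, abs_of_pos (by unfold fI; positivity)]
  unfold fI
  rw [show x ^ (-2:ℝ) = (x ^ 2)⁻¹ by
    rw [show (-2:ℝ) = -((2:ℕ):ℝ) by norm_num, Real.rpow_neg hx0.le, Real.rpow_natCast],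
    one_div]
  exact inv_anti₀ (by positivity) h1

lemma ptwise {t : ℝ} (ht : 1 ≤ t) :
    t ^ (-2:ℝ) - (1/2) * t ^ (-6:ℝ) ≤ fI t ∧
    fI t ≤ t ^ (-2:ℝ) - (1/2) * t ^ (-6:ℝ) + (1/2) * t ^ (-10:ℝ) := by
  have ht0 : (0:ℝ) < t := by linarith
  have hr : ∀ n : ℕ, t ^ (-(n:ℝ)) = (t ^ n)⁻¹ := fun n => by
    rw [Real.rpow_neg ht0.le, Real.rpow_natCast]
  rw [show (-2:ℝ) = -((2:ℕ):ℝ) by norm_num, show (-6:ℝ) = -((6:ℕ):ℝ) by norm_num,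
    show (-10:ℝ) = -((10:ℕ):ℝ) by norm_num, hr, hr, hr]
  set u := Real.sqrt (1 + t ^ 4) with hu
  have hP : (0:ℝ) < 1 + t ^ 4 := by positivity
  have hu0 : (0:ℝ) < u := Real.sqrt_pos.2 hP
  have hu2 : u ^ 2 = 1 + t ^ 4 := Real.sq_sqrt hP.le
  have ht4 : (1:ℝ) ≤ t ^ 4 := one_le_pow₀ ht
  have ht8 : (1:ℝ) ≤ t ^ 8 := one_le_pow₀ ht
  have ht12 : t ^ 4 ≤ t ^ 12 := by nlinarith
  constructor
  · have heq : (t ^ 2)⁻¹ - (1/2) * (t ^ 6)⁻¹ = (2 * t ^ 4 - 1) / (2 * t ^ 6) := by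
      field_simp
    have key : (2 * t ^ 4 - 1) * u ≤ 2 * t ^ 6 := by
      have h1 : 0 ≤ (2 * t ^ 4 - 1) * u := by nlinarith
      refine (pow_le_pow_iff_left₀ h1 (by positivity) (two_ne_zero)).1 ?_
      have : ((2 * t ^ 4 - 1) * u) ^ 2 = (2 * t ^ 4 - 1) ^ 2 * (1 + t ^ 4) := by
        rw [mul_pow, hu2]
      rw [this]
      nlinarith
    show (t ^ 2)⁻¹ - (1/2) * (t ^ 6)⁻¹ ≤ fI t
    unfold fI
    rw [heq, ← hu, div_le_div_iff₀ (by positivity) hu0]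
    nlinarith [key]
  · have heq : (t ^ 2)⁻¹ - (1/2) * (t ^ 6)⁻¹ + (1/2) * (t ^ 10)⁻¹
        = (2 * t ^ 8 - t ^ 4 + 1) / (2 * t ^ 10) := by
      field_simp
    have key : 2 * t ^ 10 ≤ (2 * t ^ 8 - t ^ 4 + 1) * u := by
      refine (pow_le_pow_iff_left₀ (by positivity) (by nlinarith) (two_ne_zero)).1 ?_
      have : ((2 * t ^ 8 - t ^ 4 + 1) * u) ^ 2 = (2 * t ^ 8 - t ^ 4 + 1) ^ 2 * (1 + t ^ 4) := by
        rw [mul_pow, hu2]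
      rw [this]
      nlinarith
    show fI t ≤ _
    unfold fI
    rw [heq, ← hu, div_le_div_iff₀ hu0 (by positivity)]
    nlinarith [key]

lemma tail_bounds {z : ℝ} (hz : 1 ≤ z) :
    z⁻¹ - (z ^ 5)⁻¹ / 10 ≤ (∫ t in Ioi z, fI t) ∧
    (∫ t in Ioi z, fI t) ≤ z⁻¹ - (z ^ 5)⁻¹ / 10 + (z ^ 9)⁻¹ / 18 := by
  have hz0 : (0:ℝ) < z := by linarith
  have hfi : IntegrableOn fI (Ioi z) := f_intOn.mono_set (Ioi_subset_Ioi hz0.le)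
  have i2 : IntegrableOn (fun t : ℝ => t ^ (-2:ℝ)) (Ioi z) :=
    integrableOn_Ioi_rpow_of_lt (by norm_num) hz0
  have i6 : IntegrableOn (fun t : ℝ => t ^ (-6:ℝ)) (Ioi z) :=
    integrableOn_Ioi_rpow_of_lt (by norm_num) hz0
  have i10 : IntegrableOn (fun t : ℝ => t ^ (-10:ℝ)) (Ioi z) :=
    integrableOn_Ioi_rpow_of_lt (by norm_num) hz0
  have hI2 : ∫ t in Ioi z, t ^ (-2:ℝ) = z⁻¹ := by
    rw [integral_Ioi_rpow_of_lt (by norm_num) hz0]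
    norm_num [Real.rpow_neg_one]
  have hI6 : ∫ t in Ioi z, t ^ (-6:ℝ) = (z ^ 5)⁻¹ / 5 := by
    rw [integral_Ioi_rpow_of_lt (by norm_num) hz0]
    rw [show (-6 + 1:ℝ) = -((5:ℕ):ℝ) by norm_num, Real.rpow_neg hz0.le, Real.rpow_natCast]
    norm_num
  have hI10 : ∫ t in Ioi z, t ^ (-10:ℝ) = (z ^ 9)⁻¹ / 9 := by
    rw [integral_Ioi_rpow_of_lt (by norm_num) hz0]
    rw [show (-10 + 1:ℝ) = -((9:ℕ):ℝ) by norm_num, Real.rpow_neg hz0.le, Real.rpow_natCast]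
    norm_num
  have hval1 : (∫ t in Ioi z, (t ^ (-2:ℝ) - (1/2) * t ^ (-6:ℝ)))
      = z⁻¹ - (1/2) * ((z ^ 5)⁻¹ / 5) := by
    rw [integral_sub i2 (i6.const_mul _), integral_const_mul, hI2, hI6]
  have hval2 : (∫ t in Ioi z, (t ^ (-2:ℝ) - (1/2) * t ^ (-6:ℝ) + (1/2) * t ^ (-10:ℝ)))
      = z⁻¹ - (1/2) * ((z ^ 5)⁻¹ / 5) + (1/2) * ((z ^ 9)⁻¹ / 9) := by
    rw [integral_add (f := fun t : ℝ => t ^ (-2:ℝ) - (1/2) * t ^ (-6:ℝ))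
      (g := fun t : ℝ => (1/2) * t ^ (-10:ℝ)) (by exact i2.sub (i6.const_mul _))
      (by exact i10.const_mul _), hval1, integral_const_mul, hI10]
  constructor
  · have hmono := setIntegral_mono_on (s := Ioi z)
      (f := fun t : ℝ => t ^ (-2:ℝ) - (1/2) * t ^ (-6:ℝ)) (g := fI)
      (i2.sub (i6.const_mul _)) hfi measurableSet_Ioi
      (fun t htz => (ptwise (hz.trans (le_of_lt htz))).1)
    rw [hval1] at hmono
    linarith [hmono]
  · have hmono := setIntegral_mono_on (s := Ioi z) (f := fI)
      (g := fun t : ℝ => t ^ (-2:ℝ) - (1/2) * t ^ (-6:ℝ) + (1/2) * t ^ (-10:ℝ))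
      hfi ((i2.sub (i6.const_mul _)).add (i10.const_mul _)) measurableSet_Ioi
      (fun t htz => (ptwise (hz.trans (le_of_lt htz))).2)
    rw [hval2] at hmono
    linarith [hmono]


lemma L_eq : Lval = ∫ s in Ioi (0:ℝ), fI s := by
  have hb := beta_real
  rw [intervalIntegral.integral_of_le zero_le_one, integral_Ioc_eq_integral_Ioo, cov,
    integral_const_mul] at hb
  unfold Lval
  rw [show (5/4:ℝ) = 1/4 + 1 by norm_num, Real.Gamma_add_one (by norm_num)]
  have : Real.Gamma (1/4) * (1/4 * Real.Gamma (1/4)) / Real.sqrt Real.pi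
      = (1/4) * (Real.Gamma (1/4) ^ 2 / Real.sqrt Real.pi) := by ring
  rw [this, ← hb]
  unfold fI
  ring


set_option maxHeartbeats 1000000 in
/-- `lim_{z→∞} z(L − F(z)) = 1`, and more precisely
`lim_{z→∞} z⁵(F(z) − L + 1/z) = 1/10`; in particular
`F(z) = L − 1/z + O(z⁻⁵)` as `z → ∞`. -/
theorem Fint_asymptotics :
    Tendsto (fun z : ℝ => z * (Lval - Fint z)) atTop (𝓝 1) ∧
    Tendsto (fun z : ℝ => z ^ 5 * (Fint z - Lval + 1 / z)) atTop (𝓝 (1 / 10)) ∧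
    (fun z : ℝ => Fint z - Lval + 1 / z) =O[atTop] (fun z : ℝ => 1 / z ^ 5) := by
  set T : ℝ → ℝ := fun z => ∫ t in Ioi z, fI t with hT
  have hFT : ∀ z : ℝ, 0 < z → Lval - Fint z = T z := by
    intro z hz
    have h1 : Fint z = ∫ t in Ioc 0 z, fI t := by
      unfold Fint fI
      exact intervalIntegral.integral_of_le hz.le
    have h2 : ∫ t in Ioi (0:ℝ), fI t = (∫ t in Ioc 0 z, fI t) + T z := by
      rw [← setIntegral_union (Ioc_disjoint_Ioi le_rfl) measurableSet_Ioi
        (f_intOn.mono_set Ioc_subset_Ioi_self) (f_intOn.mono_set (Ioi_subset_Ioi hz.le)),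
        Ioc_union_Ioi_eq_Ioi hz.le]
    rw [L_eq, h1, h2]; ring
  have hp : ∀ n : ℕ, n ≠ 0 → Tendsto (fun z : ℝ => (z ^ n)⁻¹) atTop (𝓝 0) := by
    intro n hn
    exact (tendsto_pow_atTop hn).inv_tendsto_atTop
  have g1 : Tendsto (fun z : ℝ => z * (Lval - Fint z)) atTop (𝓝 1) := by
    have l1 : Tendsto (fun z : ℝ => 1 - (z ^ 4)⁻¹ / 10) atTop (𝓝 1) := by
      have := tendsto_const_nhds (x := (1:ℝ)) (f := atTop) |>.sub ((hp 4 (by norm_num)).div_const 10)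
      simpa using this
    have l2 : Tendsto (fun z : ℝ => 1 - (z ^ 4)⁻¹ / 10 + (z ^ 8)⁻¹ / 18) atTop (𝓝 1) := by
      have l3 := l1.add ((hp 8 (by norm_num)).div_const 18)
      simpa using l3
    refine tendsto_of_tendsto_of_tendsto_of_le_of_le' l1 l2 ?_ ?_
    · filter_upwards [eventually_ge_atTop (1:ℝ)] with z hz
      have hz0 : (0:ℝ) < z := by linarith
      rw [hFT z hz0]
      have hlow := (tail_bounds hz).1
      have hid : z * (z⁻¹ - (z ^ 5)⁻¹ / 10) = 1 - (z ^ 4)⁻¹ / 10 := by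
        field_simp
      nlinarith [mul_le_mul_of_nonneg_left hlow hz0.le]
    · filter_upwards [eventually_ge_atTop (1:ℝ)] with z hz
      have hz0 : (0:ℝ) < z := by linarith
      rw [hFT z hz0]
      have hhigh := (tail_bounds hz).2
      have hid : z * (z⁻¹ - (z ^ 5)⁻¹ / 10 + (z ^ 9)⁻¹ / 18) = 1 - (z ^ 4)⁻¹ / 10 + (z ^ 8)⁻¹ / 18 := by
        field_simp
      nlinarith [mul_le_mul_of_nonneg_left hhigh hz0.le]
  have key2 : ∀ z : ℝ, 0 < z → Fint z - Lval + 1 / z = 1 / z - T z := by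
    intro z hz
    have := hFT z hz
    linarith
  have g2 : Tendsto (fun z : ℝ => z ^ 5 * (Fint z - Lval + 1 / z)) atTop (𝓝 (1 / 10)) := by
    have l1 : Tendsto (fun z : ℝ => 1 / 10 - (z ^ 4)⁻¹ / 18) atTop (𝓝 (1/10)) := by
      have := tendsto_const_nhds (x := (1/10:ℝ)) (f := atTop) |>.sub ((hp 4 (by norm_num)).div_const 18)
      simpa using this
    refine tendsto_of_tendsto_of_tendsto_of_le_of_le' l1 tendsto_const_nhds ?_ ?_
    · filter_upwards [eventually_ge_atTop (1:ℝ)] with z hz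
      have hz0 : (0:ℝ) < z := by linarith
      rw [key2 z hz0]
      have hhigh := (tail_bounds hz).2
      have hid : z ^ 5 * (1 / z - (z⁻¹ - (z ^ 5)⁻¹ / 10 + (z ^ 9)⁻¹ / 18))
          = 1 / 10 - (z ^ 4)⁻¹ / 18 := by
        field_simp; ring
      nlinarith [mul_le_mul_of_nonneg_left (sub_le_sub_left hhigh (1/z)) (by positivity : (0:ℝ) ≤ z ^ 5)]
    · filter_upwards [eventually_ge_atTop (1:ℝ)] with z hz
      have hz0 : (0:ℝ) < z := by linarith
      rw [key2 z hz0]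
      have hlow := (tail_bounds hz).1
      have hid : z ^ 5 * (1 / z - (z⁻¹ - (z ^ 5)⁻¹ / 10)) = 1 / 10 := by
        field_simp; ring
      nlinarith [mul_le_mul_of_nonneg_left (sub_le_sub_left hlow (1/z)) (by positivity : (0:ℝ) ≤ z ^ 5)]
  refine ⟨g1, g2, ?_⟩
  rw [isBigO_iff]
  refine ⟨1, ?_⟩
  filter_upwards [eventually_ge_atTop (1:ℝ)] with z hz
  have hz0 : (0:ℝ) < z := by linarith
  rw [key2 z hz0]
  have hlow := (tail_bounds hz).1
  have hhigh := (tail_bounds hz).2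
  have h59 : (z ^ 9)⁻¹ ≤ (z ^ 5)⁻¹ := by
    apply inv_anti₀ (by positivity)
    exact pow_le_pow_right₀ hz (by norm_num)
  have habs : |1 / z - T z| ≤ 1 / z ^ 5 := by
    rw [abs_le]
    constructor
    · rw [one_div, one_div]
      nlinarith
    · rw [one_div, one_div]
      nlinarith
  rw [Real.norm_eq_abs, Real.norm_eq_abs, one_mul]
  calc |1 / z - T z| ≤ 1 / z ^ 5 := habs
    _ ≤ |1 / z ^ 5| := le_abs_self _
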